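/- Let N be a nonzero integer with N ≢ 0 (mod 4) or N a power of 2. If m ≥ 4 and 2^{v₂(m)} · (m-1)! divides 2N, then we reach a contradiction; that is, for m ≥ 4, 2^{v₂(m)} · (m-1)! does not divide 2N under these hypotheses. -/

import Mathlib

lemma eight_dvd_aux (m : ℕ) (hm : 4 ≤ m) :
    8 ∣ 2 ^ (padicValNat 2 m) * Nat.factorial (m - 1) := by
  have hm0 : 0 < m := by omega
  set v := padicValNat 2 m with hv
  set c := m / 2 ^ v with hc
  have hvf : v = m.factorization 2 := by
    rw [hv, Nat.factorization_def m Nat.prime_two]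
  have hmc : 2 ^ v * c = m := by
    rw [hc, hvf]
    exact Nat.ordProj_mul_ordCompl_eq_self m 2
  rw [hvf] at hc
  have hcodd : ¬ 2 ∣ c := by
    rw [hc]; exact Nat.not_dvd_ordCompl Nat.prime_two hm0.ne'
  have hfact : m * Nat.factorial (m - 1) = Nat.factorial m :=
    Nat.mul_factorial_pred hm0.ne'
  have h8 : 8 ∣ Nat.factorial m := by
    have : (8 : ℕ) ∣ Nat.factorial 4 := by decide
    exact this.trans (Nat.factorial_dvd_factorial hm)
  have h8' : 8 ∣ c * (2 ^ v * Nat.factorial (m - 1)) := by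
    rw [show c * (2 ^ v * Nat.factorial (m - 1)) = (2 ^ v * c) * Nat.factorial (m-1) by ring,
      hmc, hfact]
    exact h8
  have hcop : Nat.Coprime 8 c := by
    have h2 : Nat.Coprime 2 c := (Nat.prime_two.coprime_iff_not_dvd).mpr hcodd
    have : Nat.Coprime (2 ^ 3) c := h2.pow_left 3
    simpa using this
  exact hcop.dvd_of_dvd_mul_left h8'

theorem cor_nonexistence (N : ℤ) (hN : N ≠ 0)
    (h : ¬ (4 ∣ N) ∨ ∃ k : ℕ, N = 2 ^ k) (m : ℕ) (hm : 4 ≤ m) :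
    ¬ ((2 : ℤ) ^ (padicValNat 2 m) * ((Nat.factorial (m - 1)) : ℤ) ∣ 2 * N) := by
  intro hdvd
  rcases h with h4 | ⟨k, rfl⟩
  · have h8 : (8 : ℤ) ∣ 2 ^ (padicValNat 2 m) * ((Nat.factorial (m - 1)) : ℤ) := by
      have := eight_dvd_aux m hm
      exact_mod_cast (Int.natCast_dvd_natCast.mpr this)
    have : (8 : ℤ) ∣ 2 * N := h8.trans hdvd
    omega
  · have h3 : (3 : ℤ) ∣ 2 ^ (padicValNat 2 m) * ((Nat.factorial (m - 1)) : ℤ) := by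
      have : 3 ∣ Nat.factorial (m - 1) :=
        Nat.dvd_factorial (by norm_num) (by omega)
      exact Dvd.dvd.mul_left (by exact_mod_cast this) _
    have h3' : (3 : ℤ) ∣ 2 ^ (k + 1) := by
      have := h3.trans hdvd
      rwa [show (2 : ℤ) * 2 ^ k = 2 ^ (k+1) by ring] at this
    have := Int.prime_three.dvd_of_dvd_pow h3'
    norm_num at this
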